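/- Let \kappa \geq 2 be an integer and a a real number. Then \frac{\partial}{\partial v}\left( H_{\kappa}(a\sqrt{v}) v^{-\kappa/2} \right) = \kappa(\kappa - 1) v^{-(\kappa+2)/2} H_{\kappa - 2}(a \sqrt{v}) for v > 0. -/

import Mathlib

/-- The physicists' Hermite polynomials, via the recurrence
`H_{n+1}(x) = 2x H_n(x) - H_n'(x)`, equivalent to
`H_n(x) = (-1)^n e^{x^2} (d/dx)^n e^{-x^2}`. -/
noncomputable def hermiteH : ℕ → Polynomial ℤ
  | 0 => 1
  | n + 1 => 2 * Polynomial.X * hermiteH n - Polynomial.derivative (hermiteH n)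

/-- Evaluation of the `n`-th Hermite polynomial at a real number. -/
noncomputable def Hr (n : ℕ) (x : ℝ) : ℝ := Polynomial.aeval x (hermiteH n)

lemma hermiteH_succ (n : ℕ) :
    hermiteH (n+1) = 2 * Polynomial.X * hermiteH n - Polynomial.derivative (hermiteH n) := rfl

lemma hermiteH_derivative (n : ℕ) :
    Polynomial.derivative (hermiteH (n+1)) = Polynomial.C (2*(n+1) : ℤ) * hermiteH n := by
  induction n with
  | zero => simp [hermiteH]
  | succ n ih =>
    have hdn : Polynomial.derivative (hermiteH n)
        = 2 * Polynomial.X * hermiteH n - hermiteH (n+1) := by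
      rw [hermiteH_succ]; ring
    rw [hermiteH_succ (n+1), Polynomial.derivative_sub, Polynomial.derivative_mul, ih,
      Polynomial.derivative_C_mul, hdn]
    push_cast
    simp [Polynomial.derivative_X]
    ring

lemma hasDerivAt_Hr (n : ℕ) (x : ℝ) :
    HasDerivAt (Hr n) (Polynomial.aeval x (Polynomial.derivative (hermiteH n))) x := by
  have h := ((hermiteH n).map (algebraMap ℤ ℝ)).hasDerivAt x
  have e : Hr n = fun y => Polynomial.eval y ((hermiteH n).map (algebraMap ℤ ℝ)) := by
    funext y; simp [Hr, Polynomial.aeval_def, Polynomial.eval_map]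
  rw [e]
  simpa [Polynomial.derivative_map, Polynomial.aeval_def, Polynomial.eval_map] using h

lemma hasDerivAt_Hr' (k : ℕ) (x : ℝ) :
    HasDerivAt (Hr (k+1)) (2*((k:ℝ)+1) * Hr k x) x := by
  have h := hasDerivAt_Hr (k+1) x
  rw [hermiteH_derivative, map_mul, Polynomial.aeval_C] at h
  convert h using 1
  rw [Hr]; push_cast; norm_num

lemma Hr_rec (k : ℕ) (x : ℝ) :
    Hr (k+2) x = 2*x*Hr (k+1) x - 2*((k:ℝ)+1)*Hr k x := by
  simp only [Hr, hermiteH_succ (k+1), map_sub, hermiteH_derivative, map_mul, map_ofNat,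
    Polynomial.aeval_C, Polynomial.aeval_X]
  push_cast
  ring


/-- For integer `κ ≥ 2`, real `a` and `v > 0`,
`(∂/∂v)(H_κ(a√v) v^{-κ/2}) = κ(κ-1) v^{-(κ+2)/2} H_{κ-2}(a√v)`. -/
theorem deriv_hermite_rpow (κ : ℕ) (hκ : 2 ≤ κ) (a v : ℝ) (hv : 0 < v) :
    deriv (fun t : ℝ => Hr κ (a * Real.sqrt t) * t ^ (-(κ : ℝ) / 2)) v
      = (κ : ℝ) * ((κ : ℝ) - 1) * v ^ (-((κ : ℝ) + 2) / 2) * Hr (κ - 2) (a * Real.sqrt v) := by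
  obtain ⟨k, rfl⟩ : ∃ k, κ = k + 2 := ⟨κ - 2, by omega⟩
  set s := Real.sqrt v with hsdef
  have hs : 0 < s := Real.sqrt_pos.mpr hv
  have hs2 : s * s = v := Real.mul_self_sqrt hv.le
  -- derivative of inner function
  have h1 : HasDerivAt (fun t : ℝ => a * Real.sqrt t) (a * (1/(2*s))) v :=
    (Real.hasDerivAt_sqrt hv.ne').const_mul a
  have h3 : HasDerivAt (Hr (k+2)) (2*((k:ℝ)+2) * Hr (k+1) (a*s)) (a*s) := by
    have := hasDerivAt_Hr' (k+1) (a*s)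
    push_cast at this ⊢
    convert this using 2 <;> ring
    
  have h4 : HasDerivAt (fun t : ℝ => Hr (k+2) (a * Real.sqrt t))
      (2*((k:ℝ)+2) * Hr (k+1) (a*s) * (a * (1/(2*s)))) v := h3.comp_of_eq v h1 (by simp [hsdef])
  have h5 : HasDerivAt (fun t : ℝ => t ^ (-((k+2:ℕ) : ℝ) / 2))
      ((-((k+2:ℕ) : ℝ) / 2) * v ^ ((-((k+2:ℕ) : ℝ) / 2) - 1)) v :=
    Real.hasDerivAt_rpow_const (Or.inl hv.ne')
  have h6 := (h4.mul h5).deriv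
  refine h6.trans ?_
  have hcast : ((k+2:ℕ) : ℝ) = (k:ℝ) + 2 := by push_cast; ring
  have hksub : (k + 2) - 2 = k := by omega
  rw [hksub, hcast]
  set w := v ^ (-(((k:ℝ)+2) + 2) / 2) with hwdef
  have hw1 : v ^ (((k:ℝ)+2) * (-1) / 2 - 1) = w := by
    rw [hwdef]; ring_nf
  have hw2 : v ^ (-((k:ℝ)+2) / 2) = v * w := by
    rw [hwdef, show (-((k:ℝ)+2) / 2) = (-(((k:ℝ)+2)+2)/2) + 1 by ring, Real.rpow_add hv,
      Real.rpow_one]; ring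
  have hexp : (-((k:ℝ)+2) / 2 - 1) = ((k:ℝ)+2) * (-1) / 2 - 1 := by ring
  rw [hexp, hw1, hw2, Hr_rec k (a*s), ← hs2]
  field_simp
  ring
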